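/- arXiv:1706.06189 — 2 statements merged into one kernel-verified Lean document; each statement's English description precedes it below -/
import Mathlib

section
/- Let g(t) = (1/2)t² cos(2θ₀) + (1/4)log(1 + t⁴ - 2t² cos(2θ₀)). If π/8 ≤ |θ₀| ≤ π/4, then g'(t) > 0 for all t > 0; in particular g is strictly increasing on [0, ∞). -/
theorem stmt_2 (θ₀ : ℝ) (h1 : Real.pi / 8 ≤ |θ₀|) (h2 : |θ₀| ≤ Real.pi / 4)
    (g : ℝ → ℝ)
    (hg : g = fun t => t ^ 2 / 2 * Real.cos (2 * θ₀)
      + Real.log (1 + t ^ 4 - 2 * t ^ 2 * Real.cos (2 * θ₀)) / 4) :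
    (∀ t : ℝ, 0 < t →
      HasDerivAt g
        (t ^ 3 * (t ^ 2 * Real.cos (2 * θ₀) + 1 - 2 * Real.cos (2 * θ₀) ^ 2)
          / (1 + t ^ 4 - 2 * t ^ 2 * Real.cos (2 * θ₀))) t ∧
      0 < t ^ 3 * (t ^ 2 * Real.cos (2 * θ₀) + 1 - 2 * Real.cos (2 * θ₀) ^ 2)
          / (1 + t ^ 4 - 2 * t ^ 2 * Real.cos (2 * θ₀))) ∧
    StrictMonoOn g (Set.Ici 0) := by
  have hpi := Real.pi_pos
  set c := Real.cos (2 * θ₀) with hc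
  -- basic bounds on c
  have habs : Real.cos (2 * |θ₀|) = c := by
    rcases abs_cases θ₀ with ⟨h, _⟩ | ⟨h, _⟩
    · rw [h]
    · rw [h, hc]; rw [show 2 * -θ₀ = -(2 * θ₀) by ring, Real.cos_neg]
  have hc0 : 0 ≤ c := by
    rw [← habs]
    apply Real.cos_nonneg_of_mem_Icc
    constructor <;> nlinarith [abs_nonneg θ₀]
  have hcle : c ≤ Real.cos (Real.pi / 4) := by
    rw [← habs]
    apply Real.cos_le_cos_of_nonneg_of_le_pi
    · positivity
    · nlinarith
    · nlinarith
  rw [Real.cos_pi_div_four] at hcle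
  have hc2 : c ^ 2 ≤ 1 / 2 := by
    nlinarith [Real.sq_sqrt (by norm_num : (2:ℝ) ≥ 0), Real.sqrt_nonneg 2]
  -- denominator positive for all t
  have hD : ∀ t : ℝ, 0 < 1 + t ^ 4 - 2 * t ^ 2 * c := by
    intro t
    nlinarith [sq_nonneg (t ^ 2 - c)]
  -- numerator positive for t > 0
  have hN : ∀ t : ℝ, 0 < t → 0 < t ^ 3 * (t ^ 2 * c + 1 - 2 * c ^ 2) := by
    intro t ht
    have ht3 : 0 < t ^ 3 := by positivity
    rcases hc0.eq_or_lt with h | h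
    · rw [← h]; nlinarith
    · nlinarith [mul_pos (mul_pos ht ht) h]
  -- derivative
  have hderiv : ∀ t : ℝ,
      HasDerivAt g ((t * c) + (4 * t ^ 3 - 4 * t * c) / (1 + t ^ 4 - 2 * t ^ 2 * c) / 4) t := by
    intro t
    have h1 : HasDerivAt (fun t : ℝ => t ^ 2 / 2 * c) (t * c) t := by
      have := ((hasDerivAt_pow 2 t).div_const 2).mul_const c
      refine this.congr_deriv ?_
      simp only [Nat.cast_ofNat, Nat.reduceSub]
      ring
    have hu : HasDerivAt (fun t : ℝ => 1 + t ^ 4 - 2 * t ^ 2 * c)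
        (4 * t ^ 3 - 4 * t * c) t := by
      have := ((hasDerivAt_const t (1:ℝ)).add (hasDerivAt_pow 4 t)).sub
        (((hasDerivAt_pow 2 t).const_mul 2).mul_const c)
      refine this.congr_deriv ?_
      simp only [Nat.cast_ofNat, Nat.reduceSub]
      ring
    have hl := (hu.log (ne_of_gt (hD t))).div_const 4
    rw [hg]
    exact h1.add hl
  have key : ∀ t : ℝ,
      (t * c) + (4 * t ^ 3 - 4 * t * c) / (1 + t ^ 4 - 2 * t ^ 2 * c) / 4
        = t ^ 3 * (t ^ 2 * c + 1 - 2 * c ^ 2) / (1 + t ^ 4 - 2 * t ^ 2 * c) := by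
    intro t
    have := (hD t).ne'
    rw [div_div, eq_div_iff this, add_mul, div_mul_eq_mul_div, mul_comm (1 + t ^ 4 - 2 * t ^ 2 * c) 4, mul_div_mul_right _ _ this]
    ring
  have main : ∀ t : ℝ, 0 < t →
      HasDerivAt g (t ^ 3 * (t ^ 2 * c + 1 - 2 * c ^ 2) / (1 + t ^ 4 - 2 * t ^ 2 * c)) t ∧
      0 < t ^ 3 * (t ^ 2 * c + 1 - 2 * c ^ 2) / (1 + t ^ 4 - 2 * t ^ 2 * c) := by
    intro t ht
    refine ⟨?_, div_pos (hN t ht) (hD t)⟩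
    have := hderiv t
    rwa [key t] at this
  refine ⟨main, ?_⟩
  have hcont : Continuous g := by
    rw [hg]
    have : Continuous fun t : ℝ => 1 + t ^ 4 - 2 * t ^ 2 * c := by continuity
    have h1c : Continuous fun t : ℝ => t ^ 2 / 2 * c := by continuity
    exact h1c.add ((this.log (fun t => (hD t).ne')).div_const 4)
  apply strictMonoOn_of_deriv_pos (convex_Ici 0) hcont.continuousOn
  intro x hx
  rw [interior_Ici] at hx
  rw [(main x hx).1.deriv]
  exact (main x hx).2
end

section
/- Let g(t) = (1/2)t² cos(2θ₀) + (1/4)log(1 + t⁴ - 2t² cos(2θ₀)). If π/4 < |θ₀| ≤ π/2 - (1/2)arccos((2-√2)/2), then with t_max = √(2cos 2θ₀ - 1/cos 2θ₀), g is strictly increasing on [0, t_max). Moreover t_max · cos θ₀ ≥ 1. -/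
set_option maxHeartbeats 1000000 in
theorem stmt_3 (θ₀ : ℝ) (h1 : Real.pi / 4 < |θ₀|)
    (h2 : |θ₀| ≤ Real.pi / 2 - Real.arccos ((2 - Real.sqrt 2) / 2) / 2)
    (g : ℝ → ℝ)
    (hg : g = fun t => t ^ 2 / 2 * Real.cos (2 * θ₀)
      + Real.log (1 + t ^ 4 - 2 * t ^ 2 * Real.cos (2 * θ₀)) / 4)
    (tmax : ℝ)
    (htmax : tmax = Real.sqrt (2 * Real.cos (2 * θ₀) - 1 / Real.cos (2 * θ₀))) :
    StrictMonoOn g (Set.Ico 0 tmax) ∧ 1 ≤ tmax * Real.cos θ₀ := by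
  have s2 : Real.sqrt 2 ^ 2 = 2 := Real.sq_sqrt (by norm_num)
  have s2gt : (1:ℝ) < Real.sqrt 2 := by nlinarith [Real.sqrt_nonneg 2]
  have s2lt : Real.sqrt 2 < 3/2 := by nlinarith [Real.sqrt_nonneg 2]
  set a := Real.arccos ((2 - Real.sqrt 2) / 2) with ha
  have hx1 : (2 - Real.sqrt 2) / 2 ≤ 1 := by nlinarith
  have hx0 : (0:ℝ) < (2 - Real.sqrt 2) / 2 := by nlinarith
  have hapos : 0 < a := Real.arccos_pos.2 (by nlinarith)
  have halt : a < Real.pi / 2 := Real.arccos_lt_pi_div_two.2 hx0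
  have hpi := Real.pi_pos
  -- bounds on 2|θ₀|
  have hb1 : Real.pi / 2 < 2 * |θ₀| := by linarith
  have hb2 : 2 * |θ₀| ≤ Real.pi - a := by linarith
  obtain ⟨c, hc⟩ : ∃ c, Real.cos (2 * θ₀) = c := ⟨_, rfl⟩
  rw [hc] at hg htmax
  have hceq : Real.cos (2 * |θ₀|) = c := by
    rw [← hc, ← Real.cos_abs (2 * θ₀), abs_mul, abs_two]
  have hcneg : c < 0 := by
    have h := Real.strictAntiOn_cos (by constructor <;> linarith : Real.pi/2 ∈ Set.Icc 0 Real.pi)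
      (by constructor <;> linarith : 2*|θ₀| ∈ Set.Icc 0 Real.pi) hb1
    rw [Real.cos_pi_div_two, hceq] at h
    exact h
  have hclb : (Real.sqrt 2 - 2) / 2 ≤ c := by
    have hmono : Real.cos (Real.pi - a) ≤ Real.cos (2 * |θ₀|) :=
      Real.cos_le_cos_of_nonneg_of_le_pi (by linarith) (by linarith) hb2
    rw [Real.cos_pi_sub, ha, Real.cos_arccos (by linarith) hx1, hceq] at hmono
    linarith
  have hcsq : 2 * c ^ 2 - 1 < 0 := by nlinarith
  -- D positive
  have hD : ∀ t : ℝ, 0 < 1 + t ^ 4 - 2 * t ^ 2 * c := by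
    intro t
    nlinarith [sq_nonneg (t^2), sq_nonneg t,
      mul_nonneg (sq_nonneg t) (neg_nonneg.2 hcneg.le)]
  have htm2 : 0 ≤ 2 * c - 1 / c := by
    have h : 2 * c - 1 / c = (2 * c ^ 2 - 1) / c := by
      field_simp [hcneg.ne]
    rw [h]
    exact le_of_lt (div_pos_of_neg_of_neg hcsq hcneg)
  have htmsq : tmax ^ 2 = 2 * c - 1 / c := by
    rw [htmax]; exact Real.sq_sqrt htm2
  have htmnn : 0 ≤ tmax := htmax ▸ Real.sqrt_nonneg _
  -- derivative of g
  have hderiv : ∀ t : ℝ, HasDerivAt g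
      (t * c + (4 * t ^ 3 - 4 * t * c) / (1 + t ^ 4 - 2 * t ^ 2 * c) / 4) t := by
    intro t
    have hq : HasDerivAt (fun t : ℝ => 1 + t ^ 4 - 2 * t ^ 2 * c)
        (4 * t ^ 3 - 4 * t * c) t := by
      have h4 := hasDerivAt_pow 4 t
      have h2' := (hasDerivAt_pow 2 t).const_mul 2
      have h := ((hasDerivAt_const t (1:ℝ)).add h4).sub (h2'.mul_const c)
      refine h.congr_deriv ?_
      push_cast
      ring
    have hlog := (hq.log (ne_of_gt (hD t))).div_const 4
    have hfirst : HasDerivAt (fun t : ℝ => t ^ 2 / 2 * c) (t * c) t := by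
      have h := ((hasDerivAt_pow 2 t).div_const 2).mul_const c
      refine h.congr_deriv ?_
      push_cast
      ring
    have h := hfirst.add hlog
    rw [hg]
    exact h
  -- positivity of derivative on (0, tmax)
  have hpos : ∀ t ∈ Set.Ioo (0:ℝ) tmax, 0 < deriv g t := by
    intro t ht
    rw [(hderiv t).deriv]
    have ht2 : t ^ 2 < 2 * c - 1 / c := by
      have h : t ^ 2 < tmax ^ 2 := by nlinarith [ht.1, ht.2]
      linarith [htmsq ▸ h]
    have hc1 : c * (1 / c) = 1 := by
      rw [mul_one_div, div_self hcneg.ne]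
    have hkey : 0 < c * t ^ 2 + 1 - 2 * c ^ 2 := by
      nlinarith [mul_lt_mul_of_neg_left ht2 hcneg]
    have heq : t * c + (4 * t ^ 3 - 4 * t * c) / (1 + t ^ 4 - 2 * t ^ 2 * c) / 4
        = t ^ 3 * (c * t ^ 2 + 1 - 2 * c ^ 2) / (1 + t ^ 4 - 2 * t ^ 2 * c) := by
      field_simp [(hD t).ne']
      have hD' : (1 + t ^ 4 - t ^ 2 * c * 2) ≠ 0 := by nlinarith [hD t]
      rw [eq_div_iff hD']
      field_simp
      ring
    rw [heq]
    exact div_pos (mul_pos (pow_pos ht.1 3) hkey) (hD t)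
  have hcont : ContinuousOn g (Set.Ico 0 tmax) :=
    (continuous_iff_continuousAt.2 fun t => (hderiv t).differentiableAt.continuousAt).continuousOn
  constructor
  · refine strictMonoOn_of_deriv_pos (convex_Ico 0 tmax) hcont ?_
    intro x hx
    rw [interior_Ico] at hx
    exact hpos x hx
  · -- 1 ≤ tmax * cos θ₀
    have hcosnn : 0 ≤ Real.cos θ₀ := by
      have hlt : |θ₀| ≤ Real.pi / 2 := by linarith
      obtain ⟨l, r⟩ := abs_le.1 hlt
      exact Real.cos_nonneg_of_mem_Icc ⟨by linarith, r⟩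
    have hcos2 : Real.cos θ₀ ^ 2 = 1 / 2 + c / 2 := by
      rw [← hc]; exact Real.cos_sq θ₀
    have hf : 2 * c ^ 3 + 2 * c ^ 2 - 3 * c - 1 ≤ 0 := by
      have hA : 0 ≤ 2 * c + 2 - Real.sqrt 2 := by linarith
      have hc2 : c ^ 2 < 1 := by nlinarith
      have hB : c ^ 2 + (Real.sqrt 2 / 2) * c - (2 + Real.sqrt 2) / 2 ≤ 0 := by
        have h := mul_nonpos_of_nonneg_of_nonpos
          (by positivity : (0:ℝ) ≤ Real.sqrt 2 / 2) hcneg.le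
        nlinarith
      have hprod := mul_nonpos_of_nonneg_of_nonpos hA hB
      have hexp : (2*c+2-Real.sqrt 2) * (c^2 + (Real.sqrt 2/2)*c - (2+Real.sqrt 2)/2)
          = 2*c^3 + 2*c^2 - 3*c - 1 + (Real.sqrt 2^2 - 2)*(1-c)/2 := by ring
      have hz : (Real.sqrt 2^2 - 2)*(1-c)/2 = 0 := by rw [s2]; ring
      linarith [hexp ▸ hprod]
    have hmain : 1 ≤ (2 * c - 1 / c) * (1 / 2 + c / 2) := by
      rw [← sub_nonneg]
      have heq : (2 * c - 1 / c) * (1 / 2 + c / 2) - 1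
          = (2 * c ^ 3 + 2 * c ^ 2 - 3 * c - 1) / (2 * c) := by
        field_simp [hcneg.ne]
        ring
      rw [heq, ← neg_div_neg_eq]
      exact div_nonneg (by linarith) (by linarith)
    have hsq : 1 ≤ (tmax * Real.cos θ₀) ^ 2 := by
      rw [mul_pow, htmsq, hcos2]; exact hmain
    nlinarith [mul_nonneg htmnn hcosnn]
end
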